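/- Let C = conv{γ₁, γ₂} ⊂ ℝ³ with γ₁(t) = (cos t, sin t, 1) for t ∈ [0, π/2] and γ₂(t) = (cos t, sin t, −1) for t ∈ [0, π]. Then the tangent cone T(x̄; C) at the point x̄ = (0,1,1) is not facially exposed: the ray {(0,0,z) : z ≤ 0} is a face of T(x̄;C) (it is a subface of the face exposed by the normal (0,1,0)) but it is not an exposed face of T(x̄;C). -/

import Mathlib

/- Common definitions following "Facially Dual Complete (Nice) cones and
lexicographic tangents" by V. Roshchina and L. Tunçel. -/

open Set Filter
open scoped Pointwise

local notation "⟪" x ", " y "⟫" => @inner ℝ _ _ x y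

variable {E : Type*} [NormedAddCommGroup E] [InnerProductSpace ℝ E]

/-- The tangent cone to a set `C` at `x`: the closure of the cone of feasible
directions `{d : x + ε • d ∈ C for some ε > 0}`. -/
def TangCone (x : E) (C : Set E) : Set E :=
  closure {d : E | ∃ ε : ℝ, 0 < ε ∧ x + ε • d ∈ C}

/-- `F` is a face of the convex set `C`: a closed convex subset such that any open
segment of `C` whose interior meets `F` has both endpoints in `F`. -/
def IsFaceOf (F C : Set E) : Prop :=
  F ⊆ C ∧ Convex ℝ F ∧ IsClosed F ∧
    ∀ x ∈ F, ∀ y ∈ C, ∀ z ∈ C, x ∈ openSegment ℝ y z → y ∈ F ∧ z ∈ F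

/-- A proper face: a nonempty face different from the whole set. -/
def IsProperFaceOf (F C : Set E) : Prop := IsFaceOf F C ∧ F.Nonempty ∧ F ≠ C

/-- The dual cone `K* = {s : ⟨s,x⟩ ≥ 0 for all x ∈ K}`. -/
def DualCone' (K : Set E) : Set E := {s : E | ∀ x ∈ K, 0 ≤ ⟪s, x⟫}

/-- `F^⊥ = {s : ⟨s,x⟩ = 0 for all x ∈ F}`. -/
def PerpOf (F : Set E) : Set E := {s : E | ∀ x ∈ F, ⟪s, x⟫ = 0}

/-- Facial dual completeness: `K* + F^⊥` is closed for every proper face `F` of `K`. -/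
def IsFDC (K : Set E) : Prop :=
  ∀ F : Set E, IsProperFaceOf F K → IsClosed (DualCone' K + PerpOf F)

/-- Tangential exposure: `T(x;C) ∩ span F = T(x;F)` for every proper face `F` and `x ∈ F`. -/
def TangentiallyExposed (C : Set E) : Prop :=
  ∀ F : Set E, IsProperFaceOf F C → ∀ x ∈ F,
    TangCone x C ∩ (Submodule.span ℝ F : Set E) = TangCone x F

/-- The family of all tangent cones of members of a family of sets. -/
def TangFamily (𝒦 : Set (Set E)) : Set (Set E) :=
  {T | ∃ C ∈ 𝒦, ∃ x ∈ C, T = TangCone x C}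

/-- `𝒯^k(C)`: the `k`-fold iterated tangent-cone families of `C`;
its members are the lexicographic tangent cones (of order `k`) of `C`. -/
def TangIter (C : Set E) : ℕ → Set (Set E)
  | 0 => {C}
  | k + 1 => TangFamily (TangIter C k)

/-- Strong tangential exposure: `C` and all of its lexicographic tangent cones are
tangentially exposed. -/
def StronglyTangentiallyExposed (C : Set E) : Prop :=
  ∀ k : ℕ, ∀ T ∈ TangIter C k, TangentiallyExposed T

/-- `F` is an exposed face of `C`: the set of maximizers over `C` of some linear functional. -/
def IsExposedFaceOf (F C : Set E) : Prop :=
  ∃ p : E, F = {x ∈ C | ∀ y ∈ C, ⟪p, y⟫ ≤ ⟪p, x⟫}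

/-- `C` is facially exposed: every proper face of `C` is exposed. -/
def FaciallyExposed (C : Set E) : Prop :=
  ∀ F : Set E, IsProperFaceOf F C → IsExposedFaceOf F C

/-- The normal cone to `C` at `x`. -/
def NormalCone' (x : E) (C : Set E) : Set E := {s : E | ∀ y ∈ C, ⟪s, y - x⟫ ≤ 0}

/-- The minimal face of `C` containing `S`. -/
def MinimalFace (S C : Set E) : Set E := ⋂₀ {F : Set E | IsFaceOf F C ∧ S ⊆ F}

/-- `K` is a cone: closed under positive scalar multiplication. -/
def IsConeSet (K : Set E) : Prop := ∀ c : ℝ, 0 < c → ∀ x ∈ K, c • x ∈ K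

noncomputable section CylinderExample

/-- Shorthand for vectors in `ℝ³`. -/
def v3 (a b c : ℝ) : EuclideanSpace ℝ (Fin 3) := WithLp.toLp 2 ![a, b, c]

/-- `γ₁(t) = (cos t, sin t, 1)`, `t ∈ [0, π/2]`. -/
def γ₁ (t : ℝ) : EuclideanSpace ℝ (Fin 3) := v3 (Real.cos t) (Real.sin t) 1

/-- `γ₂(t) = (cos t, sin t, −1)`, `t ∈ [0, π]`. -/
def γ₂ (t : ℝ) : EuclideanSpace ℝ (Fin 3) := v3 (Real.cos t) (Real.sin t) (-1)

/-- `C = conv{γ₁, γ₂}`. -/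
def Cset : Set (EuclideanSpace ℝ (Fin 3)) :=
  convexHull ℝ (γ₁ '' Icc 0 (Real.pi / 2) ∪ γ₂ '' Icc 0 Real.pi)

/-- The point `x̄ = (0,1,1)`. -/
def xbar : EuclideanSpace ℝ (Fin 3) := v3 0 1 1

/-- The ray `{(0,0,z) : z ≤ 0}`. -/
def Rray : Set (EuclideanSpace ℝ (Fin 3)) := {v | ∃ z : ℝ, z ≤ 0 ∧ v = v3 0 0 z}

/-- The face of `T(x̄;C)` exposed by the normal `(0,1,0)`. -/
def Gface : Set (EuclideanSpace ℝ (Fin 3)) :=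
  {x ∈ TangCone xbar Cset | ∀ y ∈ TangCone xbar Cset, ⟪v3 0 1 0, y⟫ ≤ ⟪v3 0 1 0, x⟫}

/- ======================= Auxiliary development ======================= -/

namespace CylAux

open Real

/-- AM–GM / Cauchy–Schwarz core: superadditivity of the geometric mean. -/
lemma sqrt_concave_aux (a b U1 W1 U2 W2 : ℝ) (ha : 0 ≤ a) (hb : 0 ≤ b)
    (hU1 : 0 ≤ U1) (hW1 : 0 ≤ W1) (hU2 : 0 ≤ U2) (hW2 : 0 ≤ W2) :
    a * Real.sqrt (U1 * W1) + b * Real.sqrt (U2 * W2) ≤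
      Real.sqrt ((a*U1 + b*U2) * (a*W1 + b*W2)) := by
  have h1 : 0 ≤ a * Real.sqrt (U1 * W1) + b * Real.sqrt (U2 * W2) := by positivity
  rw [← Real.sqrt_sq h1]
  apply Real.sqrt_le_sqrt
  have hr := Real.sq_sqrt (mul_nonneg hU1 hW1)
  have hs := Real.sq_sqrt (mul_nonneg hU2 hW2)
  set r := Real.sqrt (U1 * W1) with hrdef
  set s := Real.sqrt (U2 * W2) with hsdef
  have hrn : 0 ≤ r := Real.sqrt_nonneg _
  have hsn : 0 ≤ s := Real.sqrt_nonneg _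
  have hrs2 : (r*s)^2 = (U1*W2)*(U2*W1) := by
    have : (r*s)^2 = r^2 * s^2 := by ring
    rw [this, hr, hs]; ring
  have hrs : r * s = Real.sqrt (U1*W2) * Real.sqrt (U2*W1) := by
    rw [← Real.sqrt_mul (mul_nonneg hU1 hW2), ← hrs2,
      Real.sqrt_sq (mul_nonneg hrn hsn)]
  have key : 2 * (r * s) ≤ U1 * W2 + U2 * W1 := by
    rw [hrs]
    nlinarith [sq_nonneg (Real.sqrt (U1*W2) - Real.sqrt (U2*W1)),
      Real.sq_sqrt (mul_nonneg hU1 hW2), Real.sq_sqrt (mul_nonneg hU2 hW1)]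
  have key2 : 0 ≤ (a*b) * (U1*W2 + U2*W1 - 2*(r*s)) :=
    mul_nonneg (mul_nonneg ha hb) (by linarith)
  have expand : (a*U1+b*U2)*(a*W1+b*W2) - (a*r+b*s)^2 =
      a*b*(U1*W2+U2*W1-2*(r*s)) + a^2*(U1*W1 - r^2) + b^2*(U2*W2 - s^2) := by ring
  have z1 : a^2*(U1*W1 - r^2) = 0 := by rw [hr]; ring
  have z2 : b^2*(U2*W2 - s^2) = 0 := by rw [hs]; ring
  linarith [key2, z1, z2, expand]

/- vector arithmetic in `EuclideanSpace ℝ (Fin 3)` -/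

lemma v3_add (a b c a' b' c' : ℝ) :
    v3 a b c + v3 a' b' c' = v3 (a+a') (b+b') (c+c') := by
  ext i; fin_cases i <;> simp [v3, PiLp.add_apply]

lemma v3_sub (a b c a' b' c' : ℝ) :
    v3 a b c - v3 a' b' c' = v3 (a-a') (b-b') (c-c') := by
  ext i; fin_cases i <;> simp [v3, PiLp.sub_apply]

lemma v3_smul (r a b c : ℝ) : r • v3 a b c = v3 (r*a) (r*b) (r*c) := by
  ext i; fin_cases i <;> simp [v3, PiLp.smul_apply]

lemma v3_zero : (0 : EuclideanSpace ℝ (Fin 3)) = v3 0 0 0 := by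
  ext i; fin_cases i <;> rfl

lemma v3_apply0 (a b c : ℝ) : (v3 a b c) 0 = a := rfl
lemma v3_apply1 (a b c : ℝ) : (v3 a b c) 1 = b := rfl
lemma v3_apply2 (a b c : ℝ) : (v3 a b c) 2 = c := rfl

lemma inner_v3_right (p : EuclideanSpace ℝ (Fin 3)) (a b c : ℝ) :
    ⟪p, v3 a b c⟫ = p 0 * a + p 1 * b + p 2 * c := by
  simp [v3, PiLp.inner_apply, Fin.sum_univ_three, RCLike.inner_apply]; ring

lemma inner_e1 (y : EuclideanSpace ℝ (Fin 3)) : ⟪v3 0 1 0, y⟫ = y 1 := by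
  simp [v3, PiLp.inner_apply, Fin.sum_univ_three, RCLike.inner_apply]

lemma apply_add (x y : EuclideanSpace ℝ (Fin 3)) (i : Fin 3) : (x + y) i = x i + y i := rfl
lemma apply_smul (r : ℝ) (x : EuclideanSpace ℝ (Fin 3)) (i : Fin 3) : (r • x) i = r * x i := rfl
lemma apply_sub (x y : EuclideanSpace ℝ (Fin 3)) (i : Fin 3) : (x - y) i = x i - y i := rfl

/- the barrier set `S` -/

def Sset : Set (EuclideanSpace ℝ (Fin 3)) :=
  {x | x 1 ≤ 0 ∧ x 2 ≤ 0 ∧ 0 ≤ x 0 + Real.sqrt (x 1 * x 2)}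

lemma Sset_closed : IsClosed Sset := by
  have c0 : Continuous fun x : EuclideanSpace ℝ (Fin 3) => x 0 :=
    (EuclideanSpace.proj (0 : Fin 3)).continuous
  have c1 : Continuous fun x : EuclideanSpace ℝ (Fin 3) => x 1 :=
    (EuclideanSpace.proj (1 : Fin 3)).continuous
  have c2 : Continuous fun x : EuclideanSpace ℝ (Fin 3) => x 2 :=
    (EuclideanSpace.proj (2 : Fin 3)).continuous
  have : Sset = {x | x 1 ≤ 0} ∩ ({x | x 2 ≤ 0} ∩ {x | 0 ≤ x 0 + Real.sqrt (x 1 * x 2)}) := by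
    ext x; simp [Sset, and_assoc]
  rw [this]
  exact (isClosed_le c1 continuous_const).inter
    ((isClosed_le c2 continuous_const).inter
      (isClosed_le continuous_const (c0.add (Real.continuous_sqrt.comp (c1.mul c2)))))

lemma Sset_convex : Convex ℝ Sset := by
  rintro x ⟨hx1, hx2, hx0⟩ y ⟨hy1, hy2, hy0⟩ a b ha hb hab
  have h1 : (a • x + b • y) 1 = a * x 1 + b * y 1 := rfl
  have h2 : (a • x + b • y) 2 = a * x 2 + b * y 2 := rfl
  have h0 : (a • x + b • y) 0 = a * x 0 + b * y 0 := rfl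
  refine ⟨?_, ?_, ?_⟩
  · rw [h1]
    have := mul_nonneg ha (neg_nonneg.2 hx1)
    have := mul_nonneg hb (neg_nonneg.2 hy1)
    nlinarith
  · rw [h2]
    nlinarith [mul_nonneg ha (neg_nonneg.2 hx2), mul_nonneg hb (neg_nonneg.2 hy2)]
  · rw [h0, h1, h2]
    have key := sqrt_concave_aux a b (-(x 1)) (-(x 2)) (-(y 1)) (-(y 2)) ha hb
      (neg_nonneg.2 hx1) (neg_nonneg.2 hx2) (neg_nonneg.2 hy1) (neg_nonneg.2 hy2)
    have e1 : -(x 1) * -(x 2) = x 1 * x 2 := by ring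
    have e2 : -(y 1) * -(y 2) = y 1 * y 2 := by ring
    have e3 : (a * -(x 1) + b * -(y 1)) * (a * -(x 2) + b * -(y 2)) =
        (a * x 1 + b * y 1) * (a * x 2 + b * y 2) := by ring
    rw [e1, e2, e3] at key
    linarith [key, mul_nonneg ha hx0, mul_nonneg hb hy0]

lemma Sset_smul {c : ℝ} (hc : 0 < c) {x : EuclideanSpace ℝ (Fin 3)}
    (hx : x ∈ Sset) : c • x ∈ Sset := by
  obtain ⟨hx1, hx2, hx0⟩ := hx
  have h0 : (c • x) 0 = c * x 0 := rfl
  have h1 : (c • x) 1 = c * x 1 := rfl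
  have h2 : (c • x) 2 = c * x 2 := rfl
  refine ⟨?_, ?_, ?_⟩
  · rw [h1]; exact mul_nonpos_of_nonneg_of_nonpos hc.le hx1
  · rw [h2]; exact mul_nonpos_of_nonneg_of_nonpos hc.le hx2
  · rw [h0, h1, h2]
    have : c * x 1 * (c * x 2) = c^2 * (x 1 * x 2) := by ring
    rw [this, Real.sqrt_mul (sq_nonneg c), Real.sqrt_sq hc.le]
    calc (0:ℝ) = c * (x 0 + Real.sqrt (x 1 * x 2)) - c * (x 0 + Real.sqrt (x 1 * x 2)) := by ring
    _ ≤ c * (x 0 + Real.sqrt (x 1 * x 2)) := by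
        nlinarith [mul_nonneg hc.le hx0]
    _ = c * x 0 + c * Real.sqrt (x 1 * x 2) := by ring

/-- generators, shifted by `x̄`, lie in `S`. -/
lemma gen_sub_mem {p : EuclideanSpace ℝ (Fin 3)}
    (hp : p ∈ γ₁ '' Set.Icc 0 (Real.pi/2) ∪ γ₂ '' Set.Icc 0 Real.pi) :
    p - xbar ∈ Sset := by
  rcases hp with ⟨t, ht, rfl⟩ | ⟨t, ht, rfl⟩
  · have hsub : γ₁ t - xbar = v3 (Real.cos t) (Real.sin t - 1) 0 := by
      rw [γ₁, xbar, v3_sub, sub_zero, sub_self]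
    rw [hsub]
    refine ⟨by simpa [v3_apply1] using Real.sin_le_one t, by norm_num [v3_apply2], ?_⟩
    rw [v3_apply0, v3_apply1, v3_apply2, mul_zero, Real.sqrt_zero, add_zero]
    exact Real.cos_nonneg_of_mem_Icc ⟨by linarith [ht.1, Real.pi_pos], ht.2⟩
  · have hsub : γ₂ t - xbar = v3 (Real.cos t) (Real.sin t - 1) (-2) := by
      rw [γ₂, xbar, v3_sub, sub_zero]; norm_num
    rw [hsub]
    refine ⟨by simpa [v3_apply1] using Real.sin_le_one t, by norm_num [v3_apply2], ?_⟩
    rw [v3_apply0, v3_apply1, v3_apply2]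
    rcases le_or_gt 0 (Real.cos t) with h | h
    · positivity
    · have hb : (-Real.cos t)^2 ≤ (Real.sin t - 1) * (-2) := by
        nlinarith [Real.sin_sq_add_cos_sq t, sq_nonneg (1 - Real.sin t)]
      have := Real.sqrt_le_sqrt hb
      rw [Real.sqrt_sq (by linarith)] at this
      linarith

/-- the convex hull lies in the shifted barrier set. -/
lemma Cset_sub_mem {c : EuclideanSpace ℝ (Fin 3)} (hc : c ∈ Cset) : c - xbar ∈ Sset := by
  have hconv : Convex ℝ {y : EuclideanSpace ℝ (Fin 3) | y - xbar ∈ Sset} := by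
    intro y hy z hz a b ha hb hab
    have : a • y + b • z - xbar = a • (y - xbar) + b • (z - xbar) := by
      have h1 : a • (y - xbar) + b • (z - xbar) = a • y + b • z - (a • xbar + b • xbar) := by
        rw [smul_sub, smul_sub]; abel
      rw [h1, ← add_smul, hab, one_smul]
    simpa [Set.mem_setOf_eq, this] using Sset_convex hy hz ha hb hab
  exact convexHull_min (fun p hp => gen_sub_mem hp) hconv hc

/-- the set of feasible directions. -/
def Dset : Set (EuclideanSpace ℝ (Fin 3)) :=
  {d | ∃ ε : ℝ, 0 < ε ∧ xbar + ε • d ∈ Cset}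

lemma tangCone_eq : TangCone xbar Cset = closure Dset := rfl

lemma Dset_subset_Sset : Dset ⊆ Sset := by
  rintro d ⟨ε, hε, hmem⟩
  have h1 : (xbar + ε • d) - xbar ∈ Sset := Cset_sub_mem hmem
  rw [add_sub_cancel_left] at h1
  have h2 := Sset_smul (inv_pos.2 hε) h1
  rwa [smul_smul, inv_mul_cancel₀ hε.ne', one_smul] at h2

lemma T_subset_S : TangCone xbar Cset ⊆ Sset :=
  closure_minimal Dset_subset_Sset Sset_closed

lemma Dset_smul {c : ℝ} (hc : 0 < c) {d : EuclideanSpace ℝ (Fin 3)}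
    (hd : d ∈ Dset) : c • d ∈ Dset := by
  obtain ⟨ε, hε, hmem⟩ := hd
  exact ⟨ε / c, div_pos hε hc, by
    rwa [smul_smul, div_mul_cancel₀ _ hc.ne']⟩

lemma gamma1_mem_C {t : ℝ} (ht : t ∈ Set.Icc 0 (Real.pi/2)) : γ₁ t ∈ Cset :=
  subset_convexHull ℝ _ (Or.inl ⟨t, ht, rfl⟩)

lemma gamma2_mem_C {t : ℝ} (ht : t ∈ Set.Icc 0 Real.pi) : γ₂ t ∈ Cset :=
  subset_convexHull ℝ _ (Or.inr ⟨t, ht, rfl⟩)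

lemma gamma1_dir_mem_D {t : ℝ} (ht : t ∈ Set.Icc 0 (Real.pi/2)) :
    γ₁ t - xbar ∈ Dset :=
  ⟨1, one_pos, by rw [one_smul, add_sub_cancel]; exact gamma1_mem_C ht⟩

lemma gamma2_dir_mem_D {t : ℝ} (ht : t ∈ Set.Icc 0 Real.pi) :
    γ₂ t - xbar ∈ Dset :=
  ⟨1, one_pos, by rw [one_smul, add_sub_cancel]; exact gamma2_mem_C ht⟩

lemma ray_mem_D {z : ℝ} (hz : z ≤ 0) : v3 0 0 z ∈ Dset := by
  have hpos : (0:ℝ) < 1 - z := by linarith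
  refine ⟨(1 - z)⁻¹, inv_pos.2 hpos, ?_⟩
  have hxv : xbar + (1 - z)⁻¹ • v3 0 0 z = v3 0 1 (1 + (1-z)⁻¹ * z) := by
    rw [v3_smul, xbar, v3_add]; norm_num
  rw [hxv]
  have hinv : 0 < (1-z)⁻¹ := inv_pos.2 hpos
  have hm : (1-z)⁻¹ * z ≤ 0 := mul_nonpos_of_nonneg_of_nonpos hinv.le hz
  have hm2 : (1-z)⁻¹ * z = -1 + (1-z)⁻¹ := by field_simp; ring
  have hw1 : 1 + (1-z)⁻¹ * z ≤ 1 := by linarith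
  have hw0 : -1 ≤ 1 + (1-z)⁻¹ * z := by rw [hm2]; linarith
  have hg1 : γ₁ (Real.pi/2) = v3 0 1 1 := by
    rw [γ₁, Real.cos_pi_div_two, Real.sin_pi_div_two]
  have hg2 : γ₂ (Real.pi/2) = v3 0 1 (-1) := by
    rw [γ₂, Real.cos_pi_div_two, Real.sin_pi_div_two]
  have hcomb : ((1+(1 + (1-z)⁻¹ * z))/2) • γ₁ (Real.pi/2)
      + ((1-(1 + (1-z)⁻¹ * z))/2) • γ₂ (Real.pi/2) = v3 0 1 (1 + (1-z)⁻¹ * z) := by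
    rw [hg1, hg2, v3_smul, v3_smul, v3_add]
    ring_nf
  rw [← hcomb]
  have hm1 : γ₁ (Real.pi/2) ∈ Cset :=
    gamma1_mem_C ⟨by positivity, le_refl _⟩
  have hm2' : γ₂ (Real.pi/2) ∈ Cset :=
    gamma2_mem_C ⟨by positivity, by linarith [Real.pi_pos]⟩
  exact (convex_convexHull ℝ _) hm1 hm2' (by linarith) (by linarith) (by ring)

lemma Rray_mem_iff {v : EuclideanSpace ℝ (Fin 3)} :
    v ∈ Rray ↔ v 0 = 0 ∧ v 1 = 0 ∧ v 2 ≤ 0 := by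
  constructor
  · rintro ⟨z, hz, rfl⟩
    exact ⟨rfl, rfl, hz⟩
  · rintro ⟨h0, h1, h2⟩
    refine ⟨v 2, h2, ?_⟩
    ext i; fin_cases i
    · exact h0
    · exact h1
    · rfl

lemma Rray_subset_T : Rray ⊆ TangCone xbar Cset := by
  rintro v ⟨z, hz, rfl⟩
  exact subset_closure (ray_mem_D hz)

lemma Rray_closed : IsClosed Rray := by
  have : Rray = {v : EuclideanSpace ℝ (Fin 3) | v 0 = 0 ∧ v 1 = 0 ∧ v 2 ≤ 0} := by
    ext v; exact Rray_mem_iff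
  rw [this]
  have c0 : Continuous fun x : EuclideanSpace ℝ (Fin 3) => x 0 :=
    (EuclideanSpace.proj (0 : Fin 3)).continuous
  have c1 : Continuous fun x : EuclideanSpace ℝ (Fin 3) => x 1 :=
    (EuclideanSpace.proj (1 : Fin 3)).continuous
  have c2 : Continuous fun x : EuclideanSpace ℝ (Fin 3) => x 2 :=
    (EuclideanSpace.proj (2 : Fin 3)).continuous
  exact ((isClosed_eq c0 continuous_const).inter
    ((isClosed_eq c1 continuous_const).inter (isClosed_le c2 continuous_const)))

lemma Rray_convex : Convex ℝ Rray := by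
  intro x hx y hy a b ha hb hab
  rw [Rray_mem_iff] at hx hy ⊢
  refine ⟨?_, ?_, ?_⟩
  · show a * x 0 + b * y 0 = 0
    rw [hx.1, hy.1]; ring
  · show a * x 1 + b * y 1 = 0
    rw [hx.2.1, hy.2.1]; ring
  · show a * x 2 + b * y 2 ≤ 0
    exact add_nonpos (mul_nonpos_of_nonneg_of_nonpos ha hx.2.2)
      (mul_nonpos_of_nonneg_of_nonpos hb hy.2.2)

/-- the key facial computation: the open-segment condition, assuming only that the
endpoints lie in the barrier set `S`. -/
lemma face_core {x y z : EuclideanSpace ℝ (Fin 3)} (hx : x ∈ Rray)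
    (hy : y ∈ Sset) (hz : z ∈ Sset) (hseg : x ∈ openSegment ℝ y z) :
    y ∈ Rray ∧ z ∈ Rray := by
  obtain ⟨a, b, ha, hb, hab, hsum⟩ := hseg
  rw [Rray_mem_iff] at hx
  obtain ⟨hx0, hx1, hx2⟩ := hx
  obtain ⟨hy1, hy2, hy0⟩ := hy
  obtain ⟨hz1, hz2, hz0⟩ := hz
  have e0 : a * y 0 + b * z 0 = 0 := by
    have : (a • y + b • z) 0 = x 0 := by rw [hsum]
    simpa using this.trans hx0
  have e1 : a * y 1 + b * z 1 = 0 := by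
    have : (a • y + b • z) 1 = x 1 := by rw [hsum]
    simpa using this.trans hx1
  -- second coordinates vanish
  have hy1' : y 1 = 0 := by nlinarith [mul_nonpos_of_nonneg_of_nonpos ha.le hy1,
    mul_nonpos_of_nonneg_of_nonpos hb.le hz1]
  have hz1' : z 1 = 0 := by nlinarith [mul_nonpos_of_nonneg_of_nonpos ha.le hy1,
    mul_nonpos_of_nonneg_of_nonpos hb.le hz1]
  -- then first coordinates are nonnegative, hence vanish
  have hy0' : 0 ≤ y 0 := by
    have := hy0; rw [hy1'] at this; simpa using this
  have hz0' : 0 ≤ z 0 := by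
    have := hz0; rw [hz1'] at this; simpa using this
  have hy0'' : y 0 = 0 := by nlinarith [mul_nonneg ha.le hy0', mul_nonneg hb.le hz0']
  have hz0'' : z 0 = 0 := by nlinarith [mul_nonneg ha.le hy0', mul_nonneg hb.le hz0']
  exact ⟨Rray_mem_iff.2 ⟨hy0'', hy1', hy2⟩, Rray_mem_iff.2 ⟨hz0'', hz1', hz2⟩⟩

lemma tendsto_v3 {α : Type*} {l : Filter α} {g₁ g₂ g₃ : α → ℝ} {a b c : ℝ}
    (h1 : Filter.Tendsto g₁ l (nhds a)) (h2 : Filter.Tendsto g₂ l (nhds b))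
    (h3 : Filter.Tendsto g₃ l (nhds c)) :
    Filter.Tendsto (fun x => v3 (g₁ x) (g₂ x) (g₃ x)) l (nhds (v3 a b c)) := by
  rw [(PiLp.continuousLinearEquiv 2 ℝ (fun _ : Fin 3 => ℝ)).toHomeomorph.isInducing.tendsto_nhds_iff]
  rw [show ((PiLp.continuousLinearEquiv 2 ℝ (fun _ : Fin 3 => ℝ)).toHomeomorph : _ → _) ∘
      (fun x => v3 (g₁ x) (g₂ x) (g₃ x)) = fun x => ![g₁ x, g₂ x, g₃ x] from rfl]
  rw [show ((PiLp.continuousLinearEquiv 2 ℝ (fun _ : Fin 3 => ℝ)).toHomeomorph) (v3 a b c)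
      = ![a,b,c] from rfl]
  rw [tendsto_pi_nhds]
  intro i
  fin_cases i
  · simpa using h1
  · simpa using h2
  · simpa using h3

lemma tendsto_sin_div : Filter.Tendsto (fun s : ℝ => Real.sin s / s)
    (nhdsWithin 0 (Set.Ioi 0)) (nhds 1) := by
  have h := Real.hasDerivAt_sin 0
  rw [hasDerivAt_iff_tendsto_slope] at h
  have h2 := h.mono_left (nhdsWithin_mono (0:ℝ)
    (fun x hx => Set.mem_compl_singleton_iff.2 (ne_of_gt hx)))
  rw [Real.cos_zero] at h2
  refine h2.congr fun s => ?_
  simp [slope_def_field]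

lemma tendsto_cos_div : Filter.Tendsto (fun s : ℝ => (Real.cos s - 1) / s)
    (nhdsWithin 0 (Set.Ioi 0)) (nhds 0) := by
  have h := Real.hasDerivAt_cos 0
  rw [hasDerivAt_iff_tendsto_slope] at h
  have h2 := h.mono_left (nhdsWithin_mono (0:ℝ)
    (fun x hx => Set.mem_compl_singleton_iff.2 (ne_of_gt hx)))
  rw [Real.sin_zero, neg_zero] at h2
  refine h2.congr fun s => ?_
  simp [slope_def_field]

lemma tendsto_comb (q0 q1 : ℝ) :
    Filter.Tendsto (fun s : ℝ => (q0 * Real.sin s + q1 * (Real.cos s - 1)) / s)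
      (nhdsWithin 0 (Set.Ioi 0)) (nhds q0) := by
  have h := (tendsto_sin_div.const_mul q0).add (tendsto_cos_div.const_mul q1)
  norm_num at h
  refine h.congr fun s => ?_
  ring

lemma e_mem_T : v3 1 0 0 ∈ TangCone xbar Cset := by
  rw [tangCone_eq]
  have hten : Filter.Tendsto (fun u : ℝ => u⁻¹ • (γ₁ (Real.pi/2 - u) - xbar))
      (nhdsWithin 0 (Set.Ioi 0)) (nhds (v3 1 0 0)) := by
    have hco : ∀ u : ℝ, u⁻¹ • (γ₁ (Real.pi/2 - u) - xbar) =
        v3 (Real.sin u / u) ((Real.cos u - 1) / u) 0 := by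
      intro u
      rw [γ₁, xbar, v3_sub, Real.cos_pi_div_two_sub, Real.sin_pi_div_two_sub,
        sub_zero, sub_self, v3_smul]
      rw [inv_mul_eq_div, inv_mul_eq_div, mul_zero]
    simp only [hco]
    exact tendsto_v3 tendsto_sin_div tendsto_cos_div tendsto_const_nhds
  refine mem_closure_of_tendsto hten ?_
  filter_upwards [Ioc_mem_nhdsGT (by positivity : (0:ℝ) < Real.pi/2)] with u hu
  exact Dset_smul (inv_pos.2 hu.1)
    (gamma1_dir_mem_D ⟨by linarith [hu.2], by linarith [hu.1]⟩)

lemma e_not_mem_R : v3 1 0 0 ∉ Rray := by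
  rintro ⟨z, hz, hev⟩
  have h0 : (v3 1 0 0) 0 = (v3 0 0 z) 0 := by rw [hev]
  rw [v3_apply0, v3_apply0] at h0
  norm_num at h0

lemma not_exposed_R : ¬ IsExposedFaceOf Rray (TangCone xbar Cset) := by
  rintro ⟨p, hp⟩
  have h0R : (0 : EuclideanSpace ℝ (Fin 3)) ∈ Rray := ⟨0, le_refl 0, v3_zero⟩
  have h0T : (0 : EuclideanSpace ℝ (Fin 3)) ∈ TangCone xbar Cset := Rray_subset_T h0R
  have hmax0 : ∀ y ∈ TangCone xbar Cset, ⟪p, y⟫ ≤ 0 := by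
    intro y hy
    have h := h0R
    rw [hp] at h
    have := h.2 y hy
    rwa [inner_zero_right] at this
  have hm1R : v3 0 0 (-1) ∈ Rray := ⟨-1, by norm_num, rfl⟩
  have hm1T := Rray_subset_T hm1R
  have hp2 : p 2 = 0 := by
    have h := hm1R
    rw [hp] at h
    have ha := h.2 0 h0T
    rw [inner_zero_right, inner_v3_right] at ha
    have hb := hmax0 _ hm1T
    rw [inner_v3_right] at hb
    linarith
  have htop : ∀ s ∈ Set.Ioc (0:ℝ) (Real.pi/2),
      p 0 * Real.sin s + p 1 * (Real.cos s - 1) ≤ 0 := by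
    intro s hs
    have hmem : γ₁ (Real.pi/2 - s) - xbar ∈ Dset :=
      gamma1_dir_mem_D ⟨by linarith [hs.2], by linarith [hs.1]⟩
    have hco : γ₁ (Real.pi/2 - s) - xbar = v3 (Real.sin s) (Real.cos s - 1) 0 := by
      rw [γ₁, xbar, v3_sub, Real.cos_pi_div_two_sub, Real.sin_pi_div_two_sub,
        sub_zero, sub_self]
    have h := hmax0 _ (subset_closure hmem)
    rw [hco, inner_v3_right] at h
    linarith
  have hbot : ∀ s ∈ Set.Ioc (0:ℝ) (Real.pi/2),
      -(p 0) * Real.sin s + p 1 * (Real.cos s - 1) ≤ 0 := by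
    intro s hs
    have hmem : γ₂ (s + Real.pi/2) - xbar ∈ Dset := by
      refine gamma2_dir_mem_D ⟨by linarith [hs.1, Real.pi_pos], ?_⟩
      have := hs.2; linarith
    have hco : γ₂ (s + Real.pi/2) - xbar = v3 (-Real.sin s) (Real.cos s - 1) (-2) := by
      rw [γ₂, xbar, v3_sub, Real.cos_add_pi_div_two, Real.sin_add_pi_div_two, sub_zero]
      norm_num
    have h := hmax0 _ (subset_closure hmem)
    rw [hco, inner_v3_right, hp2] at h
    linarith
  have hev1 : ∀ᶠ s in nhdsWithin (0:ℝ) (Set.Ioi 0),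
      (p 0 * Real.sin s + p 1 * (Real.cos s - 1)) / s ≤ 0 := by
    filter_upwards [Ioc_mem_nhdsGT (by positivity : (0:ℝ) < Real.pi/2)] with s hs
    exact div_nonpos_of_nonpos_of_nonneg (htop s hs) hs.1.le
  have hev2 : ∀ᶠ s in nhdsWithin (0:ℝ) (Set.Ioi 0),
      (-(p 0) * Real.sin s + p 1 * (Real.cos s - 1)) / s ≤ 0 := by
    filter_upwards [Ioc_mem_nhdsGT (by positivity : (0:ℝ) < Real.pi/2)] with s hs
    exact div_nonpos_of_nonpos_of_nonneg (hbot s hs) hs.1.le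
  have key1 : p 0 ≤ 0 := le_of_tendsto (tendsto_comb (p 0) (p 1)) hev1
  have key2 : -(p 0) ≤ 0 := le_of_tendsto (tendsto_comb (-(p 0)) (p 1)) hev2
  have hp0 : p 0 = 0 := by linarith
  have heR : v3 1 0 0 ∈ Rray := by
    rw [hp]
    refine ⟨e_mem_T, fun y hy => ?_⟩
    rw [inner_v3_right, hp0]
    have := hmax0 y hy
    linarith
  exact e_not_mem_R heR

lemma faceT : IsFaceOf Rray (TangCone xbar Cset) :=
  ⟨Rray_subset_T, Rray_convex, Rray_closed,
    fun _x hx _y hy _z hz hseg => face_core hx (T_subset_S hy) (T_subset_S hz) hseg⟩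

lemma RsubG : Rray ⊆ Gface := by
  intro x hx
  refine ⟨Rray_subset_T hx, fun y hy => ?_⟩
  rw [inner_e1, inner_e1, (Rray_mem_iff.1 hx).2.1]
  exact (T_subset_S hy).1

lemma faceG : IsFaceOf Rray Gface :=
  ⟨RsubG, Rray_convex, Rray_closed,
    fun _x hx _y hy _z hz hseg => face_core hx (T_subset_S hy.1) (T_subset_S hz.1) hseg⟩

end CylAux

open CylAux

/-- **Example.** The tangent cone `T(x̄;C)` at `x̄ = (0,1,1)` is not facially exposed:
the ray `{(0,0,z) : z ≤ 0}` is a face of `T(x̄;C)` (a subface of the face exposed by the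
normal `(0,1,0)`) which is not an exposed face of `T(x̄;C)`. -/
theorem cylinder_example_tangent_cone_not_facially_exposed :
    IsFaceOf Rray (TangCone xbar Cset) ∧
    IsExposedFaceOf Gface (TangCone xbar Cset) ∧
    IsFaceOf Rray Gface ∧
    ¬ IsExposedFaceOf Rray (TangCone xbar Cset) ∧
    ¬ FaciallyExposed (TangCone xbar Cset) := by
  refine ⟨faceT, ⟨v3 0 1 0, rfl⟩, faceG, not_exposed_R, ?_⟩
  intro hFE
  apply not_exposed_R
  apply hFE
  refine ⟨faceT, ⟨0, ⟨0, le_refl 0, v3_zero⟩⟩, ?_⟩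
  intro heq
  exact e_not_mem_R (by rw [heq]; exact e_mem_T)

end CylinderExample
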